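/- The freedom in a Levi-Civita connection on a hypercubic lattice consists of reflections: let E be a real inner product space, u₁, u₂, V₁₂, V₂₁ ∈ E, and let J₁, J₂ : E → E be linear isometries. Assume the torsion-free conditions u₁ + V₁₂ = u₂ + V₂₁ and u₁ + J₁(V₁₂) = u₂ + J₂(V₂₁). Set A := J₁(V₁₂) − V₁₂. Then: (i) A = J₂(V₂₁) − V₂₁; (ii) ⟨A, A + 2·V₁₂⟩ = 0 and ⟨A, A + 2·V₂₁⟩ = 0; (iii) ⟨A, u₂ − u₁⟩ = 0; and (iv) if A ≠ 0 then, with the unit vector a := ‖A‖⁻¹ · A (which is orthogonal to u₂ − u₁), J₁(V₁₂) = V₁₂ − 2·⟨a, V₁₂⟩·a and J₂(V₂₁) = V₂₁ − 2·⟨a, V₂₁⟩·a, i.e. J₁ and J₂ act on V₁₂ and V₂₁ as the reflection in the hyperplane orthogonal to a. -/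

import Mathlib

/-- The freedom in a Levi-Civita connection on a hypercubic lattice consists of
reflections: if the torsion-free conditions hold for the transports `V₁₂, V₂₁`
and for the modified transports `J₁(V₁₂), J₂(V₂₁)`, then
`A = J₁(V₁₂) − V₁₂ = J₂(V₂₁) − V₂₁` satisfies `⟨A, A + 2V₁₂⟩ = 0`,
`⟨A, A + 2V₂₁⟩ = 0`, `⟨A, u₂ − u₁⟩ = 0`, and if `A ≠ 0` then `J₁` and `J₂` act
on `V₁₂` and `V₂₁` as the reflection in the hyperplane orthogonal to the unit
vector `a = ‖A‖⁻¹ • A` (which is orthogonal to `u₂ − u₁`). -/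
theorem hypercubic_leviCivita_freedom_reflections
    {E : Type*} [NormedAddCommGroup E] [InnerProductSpace ℝ E]
    (u₁ u₂ V₁₂ V₂₁ : E) (J₁ J₂ : E →ₗᵢ[ℝ] E)
    (htf : u₁ + V₁₂ = u₂ + V₂₁)
    (htf' : u₁ + J₁ V₁₂ = u₂ + J₂ V₂₁)
    (A : E) (hA : A = J₁ V₁₂ - V₁₂) :
    A = J₂ V₂₁ - V₂₁ ∧
    (inner ℝ A (A + (2 : ℝ) • V₁₂) : ℝ) = 0 ∧
    (inner ℝ A (A + (2 : ℝ) • V₂₁) : ℝ) = 0 ∧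
    (inner ℝ A (u₂ - u₁) : ℝ) = 0 ∧
    (A ≠ 0 →
      (inner ℝ (‖A‖⁻¹ • A) (u₂ - u₁) : ℝ) = 0 ∧
      J₁ V₁₂ = V₁₂ - (2 * (inner ℝ (‖A‖⁻¹ • A) V₁₂ : ℝ)) • (‖A‖⁻¹ • A) ∧
      J₂ V₂₁ = V₂₁ - (2 * (inner ℝ (‖A‖⁻¹ • A) V₂₁ : ℝ)) • (‖A‖⁻¹ • A)) := by
  -- (i)
  have hA' : A = J₂ V₂₁ - V₂₁ := by
    have h1 : J₁ V₁₂ = u₂ + J₂ V₂₁ - u₁ := by rw [← htf']; abel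
    have h2 : V₁₂ = u₂ + V₂₁ - u₁ := by rw [← htf]; abel
    rw [hA, h1, h2]; abel
  -- generic orthogonality ⟨J V - V, J V + V⟩ = 0
  have hgen : ∀ (J : E →ₗᵢ[ℝ] E) (V : E), (inner ℝ (J V - V) (J V + V) : ℝ) = 0 := by
    intro J V
    have h : (inner ℝ (J V - V) (J V + V) : ℝ) = ‖J V‖ ^ 2 - ‖V‖ ^ 2 := by
      rw [inner_sub_left, inner_add_right, inner_add_right,
        real_inner_self_eq_norm_sq, real_inner_self_eq_norm_sq,
        real_inner_comm (J V) V]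
      ring
    rw [h, J.norm_map]; ring
  have e1 : A + (2 : ℝ) • V₁₂ = J₁ V₁₂ + V₁₂ := by rw [hA, two_smul]; abel
  have e2 : A + (2 : ℝ) • V₂₁ = J₂ V₂₁ + V₂₁ := by rw [hA', two_smul]; abel
  have h1 : (inner ℝ A (A + (2 : ℝ) • V₁₂) : ℝ) = 0 := by
    rw [e1]; rw [hA]; exact hgen J₁ V₁₂
  have h2 : (inner ℝ A (A + (2 : ℝ) • V₂₁) : ℝ) = 0 := by
    rw [e2, hA']; exact hgen J₂ V₂₁
  have hv1 : (inner ℝ A V₁₂ : ℝ) = -‖A‖ ^ 2 / 2 := by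
    have := h1
    rw [inner_add_right, inner_smul_right, real_inner_self_eq_norm_sq] at this
    linarith
  have hv2 : (inner ℝ A V₂₁ : ℝ) = -‖A‖ ^ 2 / 2 := by
    have := h2
    rw [inner_add_right, inner_smul_right, real_inner_self_eq_norm_sq] at this
    linarith
  have hu : (inner ℝ A (u₂ - u₁) : ℝ) = 0 := by
    have hdiff : u₂ - u₁ = V₁₂ - V₂₁ := by rw [sub_eq_sub_iff_add_eq_add, ← htf]; abel
    rw [hdiff, inner_sub_right, hv1, hv2]; ring
  refine ⟨hA', h1, h2, hu, fun hne => ?_⟩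
  have hAn : ‖A‖ ≠ 0 := norm_ne_zero_iff.mpr hne
  have hsc : ∀ V : E, (inner ℝ (‖A‖⁻¹ • A) V : ℝ) = ‖A‖⁻¹ * inner ℝ A V := fun V => by
    rw [real_inner_smul_left]
  have hscale : ∀ (V : E), (inner ℝ A V : ℝ) = -‖A‖ ^ 2 / 2 →
      V - (2 * (inner ℝ (‖A‖⁻¹ • A) V : ℝ)) • (‖A‖⁻¹ • A) = V + A := by
    intro V hV
    rw [hsc, hV, smul_smul]
    have : 2 * (‖A‖⁻¹ * (-‖A‖ ^ 2 / 2)) * ‖A‖⁻¹ = -1 := by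
      field_simp
    rw [this, neg_one_smul, sub_neg_eq_add]
  refine ⟨by rw [hsc, hu, mul_zero], ?_, ?_⟩
  · rw [hscale V₁₂ hv1, hA]; abel
  · rw [hscale V₂₁ hv2, hA']; abel
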